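/- Let X and Y be Polish, c : X × Y → [0,∞) continuous, μ ∈ P(X), ν ∈ P(Y) with T_c(μ,ν) < ∞, and let π ∈ C(μ,ν) be an optimal plan. Let X̃ ⊂ X and Ỹ ⊂ Y be Borel and Polish subspaces with μ(X̃) = ν(Ỹ) = 1, let c̃ be the restriction of c to X̃ × Ỹ, and let Γ̃ = supp π ∩ (X̃ × Ỹ). Then every Kantorovich potential f ∈ S_c(μ,ν) admits a Kantorovich potential f̃ ∈ S_c̃(μ,ν) of the restricted problem (with μ, ν viewed as measures on X̃, Ỹ) such that f̃ agrees with f on pr_X(Γ̃) and the conjugates f^c and f̃^c̃ agree on pr_Y(Γ̃). -/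

import Mathlib

open MeasureTheory Filter Set Topology
open scoped ENNReal NNReal Manifold

noncomputable section

/-- The topological support of a Borel measure: points all of whose open
neighborhoods have positive measure. -/
def msupport {X : Type*} [TopologicalSpace X] [MeasurableSpace X]
    (μ : Measure X) : Set X :=
  {x | ∀ U : Set X, IsOpen U → x ∈ U → 0 < μ U}

/-- `π` is a coupling (transport plan) between `μ` and `ν`. -/
def IsCoupling {X Y : Type*} [MeasurableSpace X] [MeasurableSpace Y]
    (π : Measure (X × Y)) (μ : Measure X) (ν : Measure Y) : Prop :=
  π.map Prod.fst = μ ∧ π.map Prod.snd = ν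

/-- The optimal transport cost `T_c(μ, ν)`. -/
def transportCost {X Y : Type*} [MeasurableSpace X] [MeasurableSpace Y]
    (c : X → Y → ℝ) (μ : Measure X) (ν : Measure Y) : ℝ≥0∞ :=
  ⨅ (π : Measure (X × Y)) (_ : IsCoupling π μ ν),
    ∫⁻ p, ENNReal.ofReal (c p.1 p.2) ∂π

/-- `π` is an optimal transport plan between `μ` and `ν` for the cost `c`. -/
def IsOptimalPlan {X Y : Type*} [MeasurableSpace X] [MeasurableSpace Y]
    (c : X → Y → ℝ) (μ : Measure X) (ν : Measure Y) (π : Measure (X × Y)) : Prop :=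
  IsCoupling π μ ν ∧
    ∫⁻ p, ENNReal.ofReal (c p.1 p.2) ∂π = transportCost c μ ν

/-- The `c`-transform of a function `f : X → ℝ ∪ {-∞}`, namely
`f^c(y) = inf_x (c(x,y) - f(x))`. -/
def cTransform {X Y : Type*} (c : X → Y → ℝ) (f : X → EReal) : Y → EReal :=
  fun y => ⨅ x, ((c x y : ℝ) : EReal) - f x

/-- The `c`-transform of a function `g : Y → ℝ ∪ {-∞}`, namely
`g^c(x) = inf_y (c(x,y) - g(y))`. -/
def cTransformY {X Y : Type*} (c : X → Y → ℝ) (g : Y → EReal) : X → EReal :=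
  fun x => ⨅ y, ((c x y : ℝ) : EReal) - g y

/-- `f : X → ℝ ∪ {-∞}` is `c`-concave on `X`: it is the `c`-transform of some
`g : Y → ℝ ∪ {-∞}` and is not identically `-∞`. -/
def CConcave {X Y : Type*} (c : X → Y → ℝ) (f : X → EReal) : Prop :=
  (∃ g : Y → EReal, (∀ y, g y ≠ ⊤) ∧ f = cTransformY c g) ∧
    (∀ x, f x ≠ ⊤) ∧ (∃ x, f x ≠ ⊥)

/-- The `c`-subdifferential `∂_c f = {(x,y) | f(x) + f^c(y) = c(x,y)}`. -/
def cSubdiff {X Y : Type*} (c : X → Y → ℝ) (f : X → EReal) : Set (X × Y) :=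
  {p | f p.1 + cTransform c f p.2 = ((c p.1 p.2 : ℝ) : EReal)}

/-- `f` is a (generalized) Kantorovich potential for `(c, μ, ν)`: it is
`c`-concave and satisfies `f ⊕ f^c = c` almost surely with respect to every
optimal transport plan (which, for `T_c(μ,ν) < ∞`, is equivalent to
`∫ (f ⊕ f^c) dπ = T_c(μ,ν)` for every optimal `π`, since `f ⊕ f^c ≤ c`). -/
def IsKantorovichPotential {X Y : Type*} [MeasurableSpace X] [MeasurableSpace Y]
    (c : X → Y → ℝ) (μ : Measure X) (ν : Measure Y) (f : X → EReal) : Prop :=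
  CConcave c f ∧
    ∀ π : Measure (X × Y), IsOptimalPlan c μ ν π →
      ∀ᵐ p ∂π, f p.1 + cTransform c f p.2 = ((c p.1 p.2 : ℝ) : EReal)

/-- The plan `π` induces regularity on `U` with respect to the compact set `K`. -/
def InducesRegularityOn {X Y : Type*} [TopologicalSpace X] [TopologicalSpace Y]
    [MeasurableSpace X] [MeasurableSpace Y]
    (π : Measure (X × Y)) (U : Set X) (K : Set Y) : Prop :=
  IsCompact K ∧
    (Prod.fst '' msupport π) ∩ U = Prod.fst '' (msupport π ∩ (U ×ˢ K))

/-- The plan `π` induces regularity at the point `x ∈ supp μ`: it induces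
regularity on some relatively open neighborhood `U ⊆ supp μ` of `x`. -/
def InducesRegularityAt {X Y : Type*} [TopologicalSpace X] [TopologicalSpace Y]
    [MeasurableSpace X] [MeasurableSpace Y]
    (π : Measure (X × Y)) (μ : Measure X) (x : X) : Prop :=
  ∃ U : Set X, x ∈ U ∧ (∃ V : Set X, IsOpen V ∧ U = V ∩ msupport μ) ∧
    ∃ K : Set Y, InducesRegularityOn π U K

/-- `F` is a decomposition of the set `S` into its connected components. -/
def IsComponentDecomp {X : Type*} [TopologicalSpace X] {ι : Type*}
    (S : Set X) (F : ι → Set X) : Prop :=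
  (⋃ i, F i) = S ∧ Pairwise (fun i j => Disjoint (F i) (F j)) ∧
    ∀ i, ∃ x ∈ S, F i = connectedComponentIn S x

/-- A transport plan `π` is degenerate (with respect to decompositions `F`, `G`
of the supports of `μ` and `ν` into connected components). -/
def IsDegenerate {X Y : Type*} [MeasurableSpace X] [MeasurableSpace Y] {ι κ : Type*}
    (F : ι → Set X) (G : κ → Set Y) (μ : Measure X) (ν : Measure Y)
    (π : Measure (X × Y)) : Prop :=
  ∃ (I' : Set ι) (J' : Set κ),
    0 < (∑' i : I', μ (F i.1)) ∧
    (∑' i : I', μ (F i.1)) = (∑' i : I', ∑' j : J', π (F i.1 ×ˢ G j.1)) ∧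
    (∑' i : I', ∑' j : J', π (F i.1 ×ˢ G j.1)) = (∑' j : J', ν (G j.1)) ∧
    (∑' j : J', ν (G j.1)) < 1

end

set_option linter.unusedSectionVars false

section Helpers

/-- key EReal helper -/
lemma aux_add_sub_le (a c : EReal) : a + (c - a) ≤ c := by
  induction a with
  | bot => simp
  | coe r =>
    induction c with
    | bot => simp
    | coe s => rw [← EReal.coe_sub, ← EReal.coe_add]; norm_num
    | top => simp
  | top =>
    induction c with
    | bot => simp
    | coe s => simp [sub_eq_add_neg]
    | top => simp

lemma aux_real_of (x : EReal) (h1 : x ≠ ⊥) (h2 : x ≠ ⊤) : ∃ r : ℝ, x = r := by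
  induction x with
  | bot => simp at h1
  | coe r => exact ⟨r, rfl⟩
  | top => simp at h2

/-- f x + f^c y ≤ c x y -/
lemma aux_add_cT_le {X Y : Type*} (c : X → Y → ℝ) (f : X → EReal) (x : X) (y : Y) :
    f x + cTransform c f y ≤ ((c x y : ℝ) : EReal) := by
  have h1 : cTransform c f y ≤ ((c x y : ℝ) : EReal) - f x := iInf_le _ x
  calc f x + cTransform c f y ≤ f x + (((c x y : ℝ) : EReal) - f x) := add_le_add (le_refl _) h1
    _ ≤ _ := aux_add_sub_le _ _

lemma aux_cT_ne_top {X Y : Type*} (c : X → Y → ℝ) (f : X → EReal)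
    (x0 : X) (r : ℝ) (hx0 : f x0 = (r : EReal)) (y : Y) : cTransform c f y ≠ ⊤ := by
  have h1 : cTransform c f y ≤ ((c x0 y : ℝ) : EReal) - f x0 := iInf_le _ x0
  rw [hx0, ← EReal.coe_sub] at h1
  exact ne_top_of_le_ne_top (EReal.coe_ne_top _) h1

/-- upper semicontinuity neighborhood lemma for cTransformY -/
lemma aux_usc_nbhdY {X Y : Type*} [TopologicalSpace X] [TopologicalSpace Y]
    (c : X → Y → ℝ) (hccont : Continuous fun p : X × Y => c p.1 p.2)
    (g : Y → EReal) (hg : ∀ y, g y ≠ ⊤) (x : X) (a : ℝ)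
    (h : cTransformY c g x < (a : EReal)) :
    ∃ U : Set X, IsOpen U ∧ x ∈ U ∧ ∀ x' ∈ U, cTransformY c g x' < (a : EReal) := by
  obtain ⟨y1, hy1⟩ := iInf_lt_iff.1 h
  have hgy1 : g y1 ≠ ⊥ := by
    intro hb
    rw [hb] at hy1
    simp only [sub_eq_add_neg] at hy1
    rw [show -(⊥ : EReal) = ⊤ from rfl] at hy1
    rw [EReal.add_top_of_ne_bot (EReal.coe_ne_bot _)] at hy1
    exact (not_top_lt hy1)
  obtain ⟨r1, hr1⟩ := aux_real_of _ hgy1 (hg y1)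
  rw [hr1, ← EReal.coe_sub, EReal.coe_lt_coe_iff] at hy1
  refine ⟨{x' | c x' y1 < a + r1}, ?_, by simp only [mem_setOf_eq]; linarith, ?_⟩
  · exact isOpen_lt (hccont.comp (continuous_id.prodMk continuous_const)) continuous_const
  · intro x' hx'
    simp only [mem_setOf_eq] at hx'
    have h1 : cTransformY c g x' ≤ ((c x' y1 : ℝ) : EReal) - g y1 := iInf_le _ y1
    rw [hr1, ← EReal.coe_sub] at h1
    refine lt_of_le_of_lt h1 ?_
    rw [EReal.coe_lt_coe_iff]
    linarith

lemma aux_supp_eq {X Y : Type*} [TopologicalSpace X] [TopologicalSpace Y]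
    [MeasurableSpace X] [MeasurableSpace Y]
    (c : X → Y → ℝ) (hccont : Continuous fun p : X × Y => c p.1 p.2)
    (f : X → EReal) (g0 : Y → EReal) (hg0 : ∀ y, g0 y ≠ ⊤)
    (hfg0 : f = cTransformY c g0) (hftop : ∀ x, f x ≠ ⊤)
    (hgtop : ∀ y, cTransform c f y ≠ ⊤)
    (π : Measure (X × Y))
    (hae : ∀ᵐ p ∂π, f p.1 + cTransform c f p.2 = ((c p.1 p.2 : ℝ) : EReal))
    (p : X × Y) (hp : p ∈ msupport π) :
    f p.1 + cTransform c f p.2 = ((c p.1 p.2 : ℝ) : EReal) := by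
  by_contra hne
  have hlt : f p.1 + cTransform c f p.2 < ((c p.1 p.2 : ℝ) : EReal) :=
    lt_of_le_of_ne (aux_add_cT_le c f p.1 p.2) hne
  -- find real a, b with f p.1 < a, g p.2 < b, a + b < c p
  obtain ⟨a, b, ha, hb, hab⟩ :
      ∃ a b : ℝ, f p.1 < (a : EReal) ∧ cTransform c f p.2 < (b : EReal) ∧
        a + b < c p.1 p.2 := by
    by_cases hFb : f p.1 = ⊥
    · obtain ⟨b, hb, -⟩ := EReal.exists_between_coe_real
        (lt_top_iff_ne_top.2 (hgtop p.2))
      exact ⟨c p.1 p.2 - b - 1, b, by rw [hFb]; exact EReal.bot_lt_coe _, hb, by linarith⟩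
    · by_cases hGb : cTransform c f p.2 = ⊥
      · obtain ⟨a, ha, -⟩ := EReal.exists_between_coe_real
          (lt_top_iff_ne_top.2 (hftop p.1))
        exact ⟨a, c p.1 p.2 - a - 1, ha, by rw [hGb]; exact EReal.bot_lt_coe _, by linarith⟩
      · obtain ⟨ra, hra⟩ := aux_real_of _ hFb (hftop p.1)
        obtain ⟨rb, hrb⟩ := aux_real_of _ hGb (hgtop p.2)
        rw [hra, hrb, ← EReal.coe_add, EReal.coe_lt_coe_iff] at hlt
        refine ⟨ra + (c p.1 p.2 - (ra + rb)) / 3, rb + (c p.1 p.2 - (ra + rb)) / 3,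
          ?_, ?_, by linarith⟩
        · rw [hra, EReal.coe_lt_coe_iff]; linarith
        · rw [hrb, EReal.coe_lt_coe_iff]; linarith
  rw [hfg0] at ha
  obtain ⟨U, hUo, hxU, hU⟩ := aux_usc_nbhdY c hccont g0 hg0 p.1 a ha
  have hb' : cTransformY (fun y x => c x y) f p.2 < (b : EReal) := hb
  obtain ⟨V, hVo, hyV, hV⟩ := aux_usc_nbhdY (fun y x => c x y)
    (hccont.comp continuous_swap) f hftop p.2 b hb'
  set N : Set (X × Y) := (U ×ˢ V) ∩ {q : X × Y | a + b < c q.1 q.2} with hN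
  have hNo : IsOpen N := (hUo.prod hVo).inter (isOpen_lt continuous_const hccont)
  have hpN : p ∈ N := ⟨⟨hxU, hyV⟩, hab⟩
  have hpos : 0 < π N := hp N hNo hpN
  have hsub : N ⊆ {q : X × Y | ¬ (f q.1 + cTransform c f q.2 = ((c q.1 q.2 : ℝ) : EReal))} := by
    rintro q ⟨⟨hqU, hqV⟩, hqc⟩
    simp only [mem_setOf_eq] at hqc ⊢
    have h1 : f q.1 + cTransform c f q.2 < ((a : EReal) + (b : EReal)) :=
      EReal.add_lt_add (by rw [hfg0]; exact hU q.1 hqU)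
        (show cTransformY (fun y x => c x y) f q.2 < (b : EReal) from hV q.2 hqV)
    rw [← EReal.coe_add] at h1
    exact ne_of_lt (lt_trans h1 (EReal.coe_lt_coe_iff.2 hqc))
  have hzero : π N = 0 := measure_mono_null hsub (ae_iff.1 hae)
  rw [hzero] at hpos
  exact lt_irrefl _ hpos

section Meas

variable {X Y : Type*} [MeasurableSpace X] [MeasurableSpace Y]
  {Xt : Set X} {Yt : Set Y}

/-- the embedding of the restricted product space -/
def emb (Xt : Set X) (Yt : Set Y) : ↥Xt × ↥Yt → X × Y := fun q => (q.1.1, q.2.1)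

lemma emb_memb (hXtm : MeasurableSet Xt) (hYtm : MeasurableSet Yt) :
    MeasurableEmbedding (emb Xt Yt) :=
  MeasurableEmbedding.prodMap (MeasurableEmbedding.subtype_coe hXtm)
    (MeasurableEmbedding.subtype_coe hYtm)

omit [MeasurableSpace X] [MeasurableSpace Y] in
lemma emb_range : range (emb Xt Yt) = Xt ×ˢ Yt := by
  ext p
  constructor
  · rintro ⟨q, rfl⟩; exact ⟨q.1.2, q.2.2⟩
  · rintro ⟨h1, h2⟩; exact ⟨(⟨p.1, h1⟩, ⟨p.2, h2⟩), rfl⟩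

variable (μ : Measure X) (ν : Measure Y) [IsProbabilityMeasure μ] [IsProbabilityMeasure ν]

lemma map_comap_val (hXtm : MeasurableSet Xt) (hXt1 : μ Xt = 1) :
    (μ.comap (Subtype.val : ↥Xt → X)).map Subtype.val = μ := by
  rw [(MeasurableEmbedding.subtype_coe hXtm).map_comap, Subtype.range_coe]
  exact Measure.restrict_eq_self_of_ae_mem
    (ae_iff.2 (by exact (prob_compl_eq_zero_iff hXtm).2 hXt1))

variable {π : Measure (X × Y)}

lemma pi_fst_null (hπc : IsCoupling π μ ν) (hXtm : MeasurableSet Xt) (hXt1 : μ Xt = 1) :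
    π {p : X × Y | p.1 ∉ Xt} = 0 := by
  have h1 : π (Prod.fst ⁻¹' Xtᶜ) = μ Xtᶜ := by
    rw [← hπc.1, Measure.map_apply measurable_fst hXtm.compl]
  have h2 : μ Xtᶜ = 0 := (prob_compl_eq_zero_iff hXtm).2 hXt1
  rw [h2] at h1; exact h1

lemma pi_snd_null (hπc : IsCoupling π μ ν) (hYtm : MeasurableSet Yt) (hYt1 : ν Yt = 1) :
    π {p : X × Y | p.2 ∉ Yt} = 0 := by
  have h1 : π (Prod.snd ⁻¹' Ytᶜ) = ν Ytᶜ := by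
    rw [← hπc.2, Measure.map_apply measurable_snd hYtm.compl]
  have h2 : ν Ytᶜ = 0 := (prob_compl_eq_zero_iff hYtm).2 hYt1
  rw [h2] at h1; exact h1

lemma pi_prod_null (hπc : IsCoupling π μ ν) (hXtm : MeasurableSet Xt) (hYtm : MeasurableSet Yt)
    (hXt1 : μ Xt = 1) (hYt1 : ν Yt = 1) : π ((Xt ×ˢ Yt)ᶜ) = 0 := by
  refine measure_mono_null ?_
    (measure_union_null (pi_fst_null μ ν hπc hXtm hXt1) (pi_snd_null μ ν hπc hYtm hYt1))
  intro p hp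
  by_cases h1 : p.1 ∈ Xt
  · right
    intro h2
    exact hp ⟨h1, h2⟩
  · left; exact h1

end Meas

end Helpers


section Meas2

variable {X Y : Type*} [MeasurableSpace X] [MeasurableSpace Y]
  {Xt : Set X} {Yt : Set Y}
  (μ : Measure X) (ν : Measure Y) [IsProbabilityMeasure μ] [IsProbabilityMeasure ν]

lemma map_emb_coupling {πt : Measure (↥Xt × ↥Yt)}
    (hXtm : MeasurableSet Xt) (hYtm : MeasurableSet Yt)
    (hXt1 : μ Xt = 1) (hYt1 : ν Yt = 1)
    (hπt : IsCoupling πt (μ.comap Subtype.val) (ν.comap Subtype.val)) :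
    IsCoupling (πt.map (emb Xt Yt)) μ ν := by
  have hemb := emb_memb hXtm hYtm
  constructor
  · rw [Measure.map_map measurable_fst hemb.measurable,
      show Prod.fst ∘ emb Xt Yt = (Subtype.val : ↥Xt → X) ∘ Prod.fst from rfl,
      ← Measure.map_map measurable_subtype_coe measurable_fst, hπt.1,
      map_comap_val μ hXtm hXt1]
  · rw [Measure.map_map measurable_snd hemb.measurable,
      show Prod.snd ∘ emb Xt Yt = (Subtype.val : ↥Yt → Y) ∘ Prod.snd from rfl,
      ← Measure.map_map measurable_subtype_coe measurable_snd, hπt.2,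
      map_comap_val ν hYtm hYt1]

lemma cost_map_emb (c : X → Y → ℝ)
    (hcm : Measurable fun p : X × Y => ENNReal.ofReal (c p.1 p.2))
    (hXtm : MeasurableSet Xt) (hYtm : MeasurableSet Yt)
    (πt : Measure (↥Xt × ↥Yt)) :
    ∫⁻ p, ENNReal.ofReal (c p.1 p.2) ∂(πt.map (emb Xt Yt)) =
      ∫⁻ q : ↥Xt × ↥Yt, ENNReal.ofReal (c q.1.1 q.2.1) ∂πt := by
  rw [lintegral_map hcm (emb_memb hXtm hYtm).measurable]
  rfl

lemma comap_emb_coupling (hXtm : MeasurableSet Xt) (hYtm : MeasurableSet Yt)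
    (hXt1 : μ Xt = 1) (hYt1 : ν Yt = 1)
    {π : Measure (X × Y)} (hπc : IsCoupling π μ ν) :
    IsCoupling (π.comap (emb Xt Yt)) (μ.comap Subtype.val) (ν.comap Subtype.val) := by
  have hemb := emb_memb hXtm hYtm
  constructor
  · apply Measure.ext; intro A hA
    have himgmeas : MeasurableSet (Subtype.val '' A) :=
      (MeasurableEmbedding.subtype_coe hXtm).measurableSet_image.2 hA
    rw [Measure.map_apply measurable_fst hA, hemb.comap_apply,
      (MeasurableEmbedding.subtype_coe hXtm).comap_apply]
    have himg : emb Xt Yt '' (Prod.fst ⁻¹' A) = (Subtype.val '' A) ×ˢ Yt := by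
      ext p
      constructor
      · rintro ⟨q, hq, rfl⟩
        exact ⟨⟨q.1, hq, rfl⟩, q.2.2⟩
      · rintro ⟨⟨x, hx, hx'⟩, h2⟩
        exact ⟨(x, ⟨p.2, h2⟩), hx, Prod.ext hx' rfl⟩
    rw [himg]
    have h1 : π ((Subtype.val '' A) ×ˢ Yt) = π ((Subtype.val '' A) ×ˢ (univ : Set Y)) := by
      refine le_antisymm (measure_mono (prod_mono_right (subset_univ _))) ?_
      have hsub : (Subtype.val '' A) ×ˢ (univ : Set Y) ⊆
          (Subtype.val '' A) ×ˢ Yt ∪ {p : X × Y | p.2 ∉ Yt} := by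
        rintro p ⟨h1, -⟩
        by_cases h2 : p.2 ∈ Yt
        · exact Or.inl ⟨h1, h2⟩
        · exact Or.inr h2
      have h2 := (measure_mono hsub).trans (measure_union_le (μ := π) _ _)
      rwa [pi_snd_null μ ν hπc hYtm hYt1, add_zero] at h2
    rw [h1, Set.prod_univ, ← Measure.map_apply measurable_fst himgmeas, hπc.1]
  · apply Measure.ext; intro B hB
    have himgmeas : MeasurableSet (Subtype.val '' B) :=
      (MeasurableEmbedding.subtype_coe hYtm).measurableSet_image.2 hB
    rw [Measure.map_apply measurable_snd hB, hemb.comap_apply,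
      (MeasurableEmbedding.subtype_coe hYtm).comap_apply]
    have himg : emb Xt Yt '' (Prod.snd ⁻¹' B) = Xt ×ˢ (Subtype.val '' B) := by
      ext p
      constructor
      · rintro ⟨q, hq, rfl⟩
        exact ⟨q.1.2, ⟨q.2, hq, rfl⟩⟩
      · rintro ⟨h1, ⟨y, hy, hy'⟩⟩
        exact ⟨(⟨p.1, h1⟩, y), hy, Prod.ext rfl hy'⟩
    rw [himg]
    have h1 : π (Xt ×ˢ (Subtype.val '' B)) = π ((univ : Set X) ×ˢ (Subtype.val '' B)) := by
      refine le_antisymm (measure_mono (prod_mono_left (subset_univ _))) ?_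
      have hsub : (univ : Set X) ×ˢ (Subtype.val '' B) ⊆
          Xt ×ˢ (Subtype.val '' B) ∪ {p : X × Y | p.1 ∉ Xt} := by
        rintro p ⟨-, h1⟩
        by_cases h2 : p.1 ∈ Xt
        · exact Or.inl ⟨h2, h1⟩
        · exact Or.inr h2
      have h2 := (measure_mono hsub).trans (measure_union_le (μ := π) _ _)
      rwa [pi_fst_null μ ν hπc hXtm hXt1, add_zero] at h2
    rw [h1, Set.univ_prod, ← Measure.map_apply measurable_snd himgmeas, hπc.2]

lemma comap_emb_cost (c : X → Y → ℝ)
    (hcm : Measurable fun p : X × Y => ENNReal.ofReal (c p.1 p.2))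
    (hXtm : MeasurableSet Xt) (hYtm : MeasurableSet Yt)
    (hXt1 : μ Xt = 1) (hYt1 : ν Yt = 1)
    {π : Measure (X × Y)} (hπc : IsCoupling π μ ν) :
    ∫⁻ q : ↥Xt × ↥Yt, ENNReal.ofReal (c q.1.1 q.2.1) ∂(π.comap (emb Xt Yt)) =
      ∫⁻ p, ENNReal.ofReal (c p.1 p.2) ∂π := by
  have hemb := emb_memb hXtm hYtm
  have hmap : (π.comap (emb Xt Yt)).map (emb Xt Yt) = π := by
    rw [hemb.map_comap, emb_range]
    exact Measure.restrict_eq_self_of_ae_mem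
      (ae_iff.2 (pi_prod_null μ ν hπc hXtm hYtm hXt1 hYt1))
  conv_rhs => rw [← hmap]
  rw [lintegral_map hcm hemb.measurable]
  rfl

lemma transportCost_le_cost {X' Y' : Type*} [MeasurableSpace X'] [MeasurableSpace Y']
    (c : X' → Y' → ℝ) (μ' : Measure X') (ν' : Measure Y')
    {π : Measure (X' × Y')} (h : IsCoupling π μ' ν') :
    transportCost c μ' ν' ≤ ∫⁻ p, ENNReal.ofReal (c p.1 p.2) ∂π :=
  iInf₂_le π h

lemma transportCost_restrict_eq (c : X → Y → ℝ)
    (hcm : Measurable fun p : X × Y => ENNReal.ofReal (c p.1 p.2))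
    (hXtm : MeasurableSet Xt) (hYtm : MeasurableSet Yt)
    (hXt1 : μ Xt = 1) (hYt1 : ν Yt = 1)
    {π : Measure (X × Y)} (hπ : IsOptimalPlan c μ ν π) :
    transportCost (fun (x : ↥Xt) (y : ↥Yt) => c x.1 y.1)
      (μ.comap Subtype.val) (ν.comap Subtype.val) = transportCost c μ ν := by
  apply le_antisymm
  · have h1 := transportCost_le_cost (fun (x : ↥Xt) (y : ↥Yt) => c x.1 y.1)
      (μ.comap Subtype.val) (ν.comap Subtype.val)
      (comap_emb_coupling μ ν hXtm hYtm hXt1 hYt1 hπ.1)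
    have h2 : (∫⁻ q : ↥Xt × ↥Yt, ENNReal.ofReal (c q.1.1 q.2.1) ∂(π.comap (emb Xt Yt))) =
        transportCost c μ ν := by
      rw [comap_emb_cost μ ν c hcm hXtm hYtm hXt1 hYt1 hπ.1, hπ.2]
    exact h1.trans (le_of_eq h2)
  · refine le_iInf fun πt => le_iInf fun hπt => ?_
    have h1 := transportCost_le_cost c μ ν (map_emb_coupling μ ν hXtm hYtm hXt1 hYt1 hπt)
    rwa [cost_map_emb c hcm hXtm hYtm πt] at h1

end Meas2

/-- Restriction of Kantorovich potentials to Borel Polish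
subspaces of full mass. -/
theorem stmt2 {X Y : Type*}
    [TopologicalSpace X] [PolishSpace X] [MeasurableSpace X] [BorelSpace X]
    [TopologicalSpace Y] [PolishSpace Y] [MeasurableSpace Y] [BorelSpace Y]
    (c : X → Y → ℝ) (hc0 : ∀ x y, 0 ≤ c x y)
    (hccont : Continuous fun p : X × Y => c p.1 p.2)
    (μ : Measure X) (ν : Measure Y) [IsProbabilityMeasure μ] [IsProbabilityMeasure ν]
    (hT : transportCost c μ ν < ⊤)
    (π : Measure (X × Y)) (hπ : IsOptimalPlan c μ ν π)
    (Xt : Set X) (Yt : Set Y) (hXtm : MeasurableSet Xt) (hYtm : MeasurableSet Yt)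
    (hXtP : PolishSpace ↥Xt) (hYtP : PolishSpace ↥Yt)
    (hXt1 : μ Xt = 1) (hYt1 : ν Yt = 1)
    (f : X → EReal) (hf : IsKantorovichPotential c μ ν f) :
    ∃ ft : ↥Xt → EReal,
      IsKantorovichPotential (fun (x : ↥Xt) (y : ↥Yt) => c x.1 y.1)
        (Measure.comap Subtype.val μ) (Measure.comap Subtype.val ν) ft ∧
      (∀ p : X × Y, p ∈ msupport π ∩ (Xt ×ˢ Yt) →
        ∀ hx : p.1 ∈ Xt, ft ⟨p.1, hx⟩ = f p.1) ∧
      (∀ p : X × Y, p ∈ msupport π ∩ (Xt ×ˢ Yt) →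
        ∀ hy : p.2 ∈ Yt,
          cTransform (fun (x : ↥Xt) (y : ↥Yt) => c x.1 y.1) ft ⟨p.2, hy⟩ =
            cTransform c f p.2) := by
  classical
  obtain ⟨⟨g0, hg0top, hfg0⟩, hftop, x0', hx0'⟩ := hf.1
  obtain ⟨r0, hr0⟩ := aux_real_of _ hx0' (hftop x0')
  have hgtop : ∀ y, cTransform c f y ≠ ⊤ := aux_cT_ne_top c f x0' r0 hr0
  set g : Y → EReal := cTransform c f with hgdef
  have hcm : Measurable fun p : X × Y => ENNReal.ofReal (c p.1 p.2) :=
    ENNReal.measurable_ofReal.comp hccont.measurable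
  have hπc := hπ.1
  have hemb := emb_memb hXtm hYtm
  have hπuniv : π univ = 1 := by
    have h := Measure.map_apply (measurable_fst) MeasurableSet.univ
      (f := (Prod.fst : X × Y → X)) (μ := π)
    rw [hπc.1] at h
    simpa using h.symm
  have haeπ : ∀ᵐ p ∂π, f p.1 + g p.2 = ((c p.1 p.2 : ℝ) : EReal) := hf.2 π hπ
  have hsupp : ∀ p ∈ msupport π, f p.1 + g p.2 = ((c p.1 p.2 : ℝ) : EReal) :=
    fun p hp => aux_supp_eq c hccont f g0 hg0top hfg0 hftop hgtop π haeπ p hp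
  -- find a point p0 ∈ Xt ×ˢ Yt where f + g = c
  have hbad : π ({p : X × Y | ¬ (f p.1 + g p.2 = ((c p.1 p.2 : ℝ) : EReal))} ∪ (Xt ×ˢ Yt)ᶜ) = 0 :=
    measure_union_null (ae_iff.1 haeπ) (pi_prod_null μ ν hπc hXtm hYtm hXt1 hYt1)
  have hexists : ∃ p0 : X × Y,
      (f p0.1 + g p0.2 = ((c p0.1 p0.2 : ℝ) : EReal)) ∧ p0 ∈ Xt ×ˢ Yt := by
    by_contra h
    push_neg at h
    have huniv : (univ : Set (X × Y)) ⊆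
        {p : X × Y | ¬ (f p.1 + g p.2 = ((c p.1 p.2 : ℝ) : EReal))} ∪ (Xt ×ˢ Yt)ᶜ := by
      intro p _
      by_cases heq : f p.1 + g p.2 = ((c p.1 p.2 : ℝ) : EReal)
      · exact Or.inr (h p heq)
      · exact Or.inl heq
    have h0 : π univ = 0 := measure_mono_null huniv hbad
    rw [hπuniv] at h0
    exact one_ne_zero h0
  obtain ⟨p0, heq0, hmem0⟩ := hexists
  have hf0b : f p0.1 ≠ ⊥ := by
    intro hb
    rw [hb] at heq0
    simp at heq0
  have hg0b : g p0.2 ≠ ⊥ := by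
    intro hb
    rw [hb] at heq0
    simp at heq0
  obtain ⟨ra0, hra0⟩ := aux_real_of _ hf0b (hftop p0.1)
  obtain ⟨rb0, hrb0⟩ := aux_real_of _ hg0b (hgtop p0.2)
  set x0 : ↥Xt := ⟨p0.1, hmem0.1⟩
  set y0 : ↥Yt := ⟨p0.2, hmem0.2⟩
  -- the restricted potential
  set ft : ↥Xt → EReal := fun x => ⨅ y : ↥Yt, ((c x.1 y.1 : ℝ) : EReal) - g y.1 with hftdef
  set gt : ↥Yt → EReal := cTransform (fun (x : ↥Xt) (y : ↥Yt) => c x.1 y.1) ft with hgtdef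
  -- basic inequalities
  have hfle : ∀ x : ↥Xt, f x.1 ≤ ft x := by
    intro x
    refine le_iInf fun y => ?_
    exact (EReal.le_sub_iff_add_le (Or.inr (EReal.coe_ne_bot _)) (Or.inl (hgtop y.1))).2
      (aux_add_cT_le c f x.1 y.1)
  have hftnetop : ∀ x : ↥Xt, ft x ≠ ⊤ := by
    intro x
    have h1 : ft x ≤ ((c x.1 y0.1 : ℝ) : EReal) - g y0.1 := iInf_le _ y0
    rw [show g y0.1 = (rb0 : EReal) from hrb0, ← EReal.coe_sub] at h1
    exact ne_top_of_le_ne_top (EReal.coe_ne_top _) h1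
  have hftx0 : ft x0 ≠ ⊥ := by
    intro hb
    have h1 := hfle x0
    rw [hb, le_bot_iff] at h1
    exact hf0b h1
  have hgtge : ∀ y : ↥Yt, g y.1 ≤ gt y := by
    intro y
    refine le_iInf fun x => ?_
    refine (EReal.le_sub_iff_add_le (Or.inr (EReal.coe_ne_bot _)) (Or.inl (hftnetop x))).2 ?_
    have h1 : ft x ≤ ((c x.1 y.1 : ℝ) : EReal) - g y.1 := iInf_le _ y
    have h2 : ft x + g y.1 ≤ ((c x.1 y.1 : ℝ) : EReal) :=
      (EReal.le_sub_iff_add_le (Or.inr (EReal.coe_ne_bot _)) (Or.inl (hgtop y.1))).1 h1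
    rwa [add_comm] at h2
  have hle_c : ∀ (x : ↥Xt) (y : ↥Yt), ft x + gt y ≤ ((c x.1 y.1 : ℝ) : EReal) := by
    intro x y
    have h1 : gt y ≤ ((c x.1 y.1 : ℝ) : EReal) - ft x := iInf_le _ x
    calc ft x + gt y ≤ ft x + (((c x.1 y.1 : ℝ) : EReal) - ft x) := add_le_add (le_refl _) h1
      _ ≤ _ := aux_add_sub_le _ _
  -- the restriction property on the support
  have hrestr : ∀ p : X × Y, p ∈ msupport π ∩ (Xt ×ˢ Yt) →
      ∀ hx : p.1 ∈ Xt, ft ⟨p.1, hx⟩ = f p.1 := by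
    intro p hp hx
    have heq := hsupp p hp.1
    have hfb : f p.1 ≠ ⊥ := by
      intro hb; rw [hb] at heq; simp at heq
    have hgb : g p.2 ≠ ⊥ := by
      intro hb; rw [hb] at heq; simp at heq
    obtain ⟨a, ha⟩ := aux_real_of _ hfb (hftop p.1)
    obtain ⟨b, hb⟩ := aux_real_of _ hgb (hgtop p.2)
    rw [ha, hb, ← EReal.coe_add] at heq
    have habc : a + b = c p.1 p.2 := by exact_mod_cast heq
    refine le_antisymm ?_ (hfle ⟨p.1, hx⟩)
    have h1 : ft ⟨p.1, hx⟩ ≤ ((c p.1 p.2 : ℝ) : EReal) - g p.2 :=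
      iInf_le _ (⟨p.2, hp.2.2⟩ : ↥Yt)
    rw [hb, ← EReal.coe_sub] at h1
    rw [ha]
    refine h1.trans (le_of_eq ?_)
    norm_cast
    linarith
  have hrestr' : ∀ p : X × Y, p ∈ msupport π ∩ (Xt ×ˢ Yt) →
      ∀ hy : p.2 ∈ Yt, gt ⟨p.2, hy⟩ = g p.2 := by
    intro p hp hy
    have heq := hsupp p hp.1
    have hfb : f p.1 ≠ ⊥ := by
      intro hb; rw [hb] at heq; simp at heq
    have hgb : g p.2 ≠ ⊥ := by
      intro hb; rw [hb] at heq; simp at heq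
    obtain ⟨a, ha⟩ := aux_real_of _ hfb (hftop p.1)
    obtain ⟨b, hb⟩ := aux_real_of _ hgb (hgtop p.2)
    rw [ha, hb, ← EReal.coe_add] at heq
    have habc : a + b = c p.1 p.2 := by exact_mod_cast heq
    refine le_antisymm ?_ (hgtge ⟨p.2, hy⟩)
    have h1 : gt ⟨p.2, hy⟩ ≤ ((c p.1 p.2 : ℝ) : EReal) - ft ⟨p.1, hp.2.1⟩ :=
      iInf_le _ (⟨p.1, hp.2.1⟩ : ↥Xt)
    rw [hrestr p hp hp.2.1, ha, ← EReal.coe_sub] at h1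
    rw [hb]
    refine h1.trans (le_of_eq ?_)
    norm_cast
    linarith
  refine ⟨ft, ⟨⟨⟨fun y => g y.1, fun y => hgtop y.1, rfl⟩, hftnetop, x0, hftx0⟩, ?_⟩,
    hrestr, hrestr'⟩
  -- the a.e. property for every optimal plan of the restricted problem
  intro πt hπtopt
  have hcoup' : IsCoupling (πt.map (emb Xt Yt)) μ ν :=
    map_emb_coupling μ ν hXtm hYtm hXt1 hYt1 hπtopt.1
  have hcost' : ∫⁻ p, ENNReal.ofReal (c p.1 p.2) ∂(πt.map (emb Xt Yt)) =
      transportCost c μ ν := by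
    rw [cost_map_emb c hcm hXtm hYtm πt]
    have h1 := hπtopt.2
    have h2 := transportCost_restrict_eq μ ν c hcm hXtm hYtm hXt1 hYt1 hπ
    exact h1.trans h2
  have hopt' : IsOptimalPlan c μ ν (πt.map (emb Xt Yt)) := ⟨hcoup', hcost'⟩
  have hae' := hf.2 _ hopt'
  set Bad : Set (X × Y) := {p : X × Y | ¬ (f p.1 + g p.2 = ((c p.1 p.2 : ℝ) : EReal))}
    with hBad
  have h0 : (πt.map (emb Xt Yt)) Bad = 0 := ae_iff.1 hae'
  have hT0 : (πt.map (emb Xt Yt)) (toMeasurable (πt.map (emb Xt Yt)) Bad) = 0 := by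
    rw [measure_toMeasurable]; exact h0
  have hTpre : πt (emb Xt Yt ⁻¹' toMeasurable (πt.map (emb Xt Yt)) Bad) = 0 := by
    rw [← Measure.map_apply hemb.measurable (measurableSet_toMeasurable _ _)]
    exact hT0
  refine ae_iff.2 (measure_mono_null ?_ hTpre)
  intro q hq
  refine mem_preimage.2 (subset_toMeasurable _ _ ?_)
  show ¬ (f q.1.1 + g q.2.1 = ((c q.1.1 q.2.1 : ℝ) : EReal))
  intro heq
  apply hq
  show ft q.1 + gt q.2 = ((c q.1.1 q.2.1 : ℝ) : EReal)
  refine le_antisymm (hle_c q.1 q.2) ?_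
  calc ((c q.1.1 q.2.1 : ℝ) : EReal) = f q.1.1 + g q.2.1 := heq.symm
    _ ≤ ft q.1 + gt q.2 := add_le_add (hfle q.1) (hgtge q.2)
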